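/- The partial derivative of the BDPO loss L_B(p,q) = -log σ(β log(p/(λq+(1-λ)b)) - c) with respect to q equals β·σ(-(β log(p/(λq+(1-λ)b)) - c))·λ/(λq+(1-λ)b), and this derivative is uniformly bounded above by βλ/((1-λ)b) for all (p,q) ∈ (0,1]×[0,1]. -/

import Mathlib

noncomputable def sigmoid (x : ℝ) : ℝ := 1 / (1 + Real.exp (-x))

/-- The partial derivative of the BDPO loss
L_B(p,q) = -log σ(β log(p/(λq+(1-λ)b)) - c) with respect to q equals
β·σ(-(β log(p/(λq+(1-λ)b)) - c))·λ/(λq+(1-λ)b), and this derivative is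
uniformly bounded above by βλ/((1-λ)b) for all (p,q) ∈ (0,1]×[0,1]. -/
theorem bdpo_loss_deriv_rejected_bounded (b β lam c : ℝ) (hb : b ∈ Set.Ioo (0 : ℝ) 1)
    (hβ : 0 < β) (hlam : lam ∈ Set.Ioo (0 : ℝ) 1) :
    ∀ p ∈ Set.Ioc (0 : ℝ) 1, ∀ q ∈ Set.Icc (0 : ℝ) 1,
      HasDerivAt
        (fun q => -Real.log (sigmoid (β * Real.log (p / (lam * q + (1 - lam) * b)) - c)))
        (β * sigmoid (-(β * Real.log (p / (lam * q + (1 - lam) * b)) - c)) *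
          (lam / (lam * q + (1 - lam) * b))) q
      ∧
      β * sigmoid (-(β * Real.log (p / (lam * q + (1 - lam) * b)) - c)) *
          (lam / (lam * q + (1 - lam) * b)) ≤ β * lam / ((1 - lam) * b) := by
  obtain ⟨hb0, hb1⟩ := hb
  obtain ⟨hl0, hl1⟩ := hlam
  intro p hp q hq
  have hKb : 0 < (1 - lam) * b := mul_pos (by linarith) hb0
  have hDpos : ∀ x ∈ Set.Icc (0:ℝ) 1, 0 < lam * x + (1 - lam) * b := by
    intro x hx
    have : 0 ≤ lam * x := mul_nonneg hl0.le hx.1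
    linarith
  set D : ℝ := lam * q + (1 - lam) * b with hD
  have hDq : 0 < D := hDpos q hq
  have hp0 : 0 < p := hp.1
  set u : ℝ := β * Real.log (p / D) - c with hu
  -- derivative part
  have hder : HasDerivAt
      (fun x => -Real.log (sigmoid (β * Real.log (p / (lam * x + (1 - lam) * b)) - c)))
      (β * sigmoid (-u) * (lam / D)) q := by
    have hDder : HasDerivAt (fun x : ℝ => lam * x + (1 - lam) * b) lam q := by
      simpa using ((hasDerivAt_id q).const_mul lam).add_const ((1 - lam) * b)
    have hlogD : HasDerivAt (fun x : ℝ => Real.log (lam * x + (1 - lam) * b)) (lam / D) q := by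
      have := hDder.log hDq.ne'
      simpa using this
    have huder : HasDerivAt (fun x : ℝ =>
        β * Real.log (p / (lam * x + (1 - lam) * b)) - c) (-(β * (lam / D))) q := by
      have h1 : HasDerivAt (fun x : ℝ =>
          β * (Real.log p - Real.log (lam * x + (1 - lam) * b)) - c)
          (β * (0 - lam / D)) q := by
        exact (((hasDerivAt_const q (Real.log p)).sub hlogD).const_mul β).sub_const c
      have heq : (fun x : ℝ => β * (Real.log p - Real.log (lam * x + (1 - lam) * b)) - c)
          =ᶠ[nhds q] (fun x : ℝ => β * Real.log (p / (lam * x + (1 - lam) * b)) - c) := by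
        have : ∀ᶠ x in nhds q, 0 < lam * x + (1 - lam) * b := by
          have hc : ContinuousAt (fun x : ℝ => lam * x + (1 - lam) * b) q :=
            Continuous.continuousAt (by continuity)
          exact hc.eventually (eventually_gt_nhds hDq)
        filter_upwards [this] with x hx
        rw [Real.log_div hp0.ne' hx.ne']
      have := h1.congr_of_eventuallyEq heq.symm
      simpa using this
    -- -log(sigmoid u) = log(1 + exp(-u))
    have hexp : HasDerivAt (fun x : ℝ =>
        Real.exp (-(β * Real.log (p / (lam * x + (1 - lam) * b)) - c)))
        (Real.exp (-u) * (β * (lam / D))) q := by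
      have := (huder.neg).exp
      simpa only [Pi.neg_apply, neg_neg] using this
    have h1e : 0 < 1 + Real.exp (-u) := by positivity
    have hlog : HasDerivAt (fun x : ℝ =>
        Real.log (1 + Real.exp (-(β * Real.log (p / (lam * x + (1 - lam) * b)) - c))))
        (Real.exp (-u) * (β * (lam / D)) / (1 + Real.exp (-u))) q := by
      have hadd := (hasDerivAt_const q (1:ℝ)).add hexp
      have := hadd.log (by positivity)
      simpa only [Pi.add_apply, zero_add] using this
    have hfun : (fun x : ℝ =>
        -Real.log (sigmoid (β * Real.log (p / (lam * x + (1 - lam) * b)) - c)))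
        = (fun x : ℝ =>
        Real.log (1 + Real.exp (-(β * Real.log (p / (lam * x + (1 - lam) * b)) - c)))) := by
      funext x
      have hpos : (0:ℝ) < 1 + Real.exp (-(β * Real.log (p / (lam * x + (1 - lam) * b)) - c)) :=
        by positivity
      rw [sigmoid, Real.log_div one_ne_zero hpos.ne', Real.log_one]
      ring
    rw [hfun]
    convert hlog using 1
    have hσ : sigmoid (-u) = Real.exp (-u) / (1 + Real.exp (-u)) := by
      rw [sigmoid, neg_neg]
      rw [eq_div_iff h1e.ne']
      have hE : Real.exp u ≠ 0 := (Real.exp_pos u).ne'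
      field_simp [Real.exp_neg]
      have h2 : Real.exp (-u) * Real.exp u = 1 := by rw [← Real.exp_add]; simp
      linear_combination -h2
    rw [hσ]
    ring
  refine ⟨hder, ?_⟩
  -- bound
  have hσlt : sigmoid (-u) ≤ 1 := by
    rw [sigmoid]
    have : (0:ℝ) < 1 + Real.exp (-(-u)) := by positivity
    rw [div_le_one this]
    have := (Real.exp_pos (-(-u))).le
    linarith
  have hσ0 : 0 ≤ sigmoid (-u) := by
    rw [sigmoid]; positivity
  calc β * sigmoid (-u) * (lam / D) ≤ β * 1 * (lam / D) := by
        apply mul_le_mul_of_nonneg_right _ (by positivity)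
        exact mul_le_mul_of_nonneg_left hσlt hβ.le
    _ = β * lam / D := by ring
    _ ≤ β * lam / ((1 - lam) * b) := by
        apply div_le_div_of_nonneg_left (by positivity) hKb
        have : 0 ≤ lam * q := mul_nonneg hl0.le hq.1
        linarith
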